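/- Let Z be a nonempty finite type, P : Z → Z → ℝ a row-stochastic matrix that is irreducible, and W ⊆ Z with at least two elements. Then for every a ∈ W, ∑_{b ∈ W, b ≠ a} P(R^W_{a,b}) = 1; that is, the factor-chain transition matrix P̄ on W is row-stochastic. -/

import Mathlib

open scoped Classical

/-- Probability of a path `x = (x₀, …, x_m)` of length `m`:
`Prob(x) = ∏_{i=1}^m P(x_{i-1}, x_i)`. -/
def pathProb {Z : Type*} (P : Z → Z → ℝ) {m : ℕ} (x : Fin (m + 1) → Z) : ℝ :=
  ∏ i : Fin m, P (x i.castSucc) (x i.succ)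

/-- `P` is a row-stochastic matrix. -/
def RowStochastic {Z : Type*} [Fintype Z] (P : Z → Z → ℝ) : Prop :=
  (∀ a b, 0 ≤ P a b) ∧ ∀ a, ∑ b, P a b = 1

/-- The chain is irreducible: for all `a b` there is `m ≥ 1` with `(P^m)(a,b) > 0`. -/
def IsIrreducibleChain {Z : Type*} [Fintype Z] [DecidableEq Z] (P : Z → Z → ℝ) : Prop :=
  ∀ a b : Z, ∃ m : ℕ, 1 ≤ m ∧ 0 < (Matrix.of P ^ m) a b

/-- The probability `P(R^W_{a,b})` of the set of `W`-arrows from `a` to `b`: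
the sum over all lengths `m ≥ 1` of the probabilities of paths `x` of length `m`
with `x₀ = a`, `x_m = b`, and `x_i ∈ W → x_i = a` for every `i < m`. -/
noncomputable def arrowProb {Z : Type*} [Fintype Z] (P : Z → Z → ℝ) (W : Finset Z)
    (a b : Z) : ℝ :=
  ∑' m : ℕ, ∑ x ∈ Finset.univ.filter (fun x : Fin (m + 1 + 1) → Z =>
      x 0 = a ∧ x (Fin.last (m + 1)) = b ∧
      ∀ i : Fin (m + 1 + 1), i < Fin.last (m + 1) → x i ∈ W → x i = a),
    pathProb P x

section aux
variable {Z : Type*} [Fintype Z] [DecidableEq Z]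

noncomputable def pathF (M : Z → Z → ℝ) (n : ℕ) (a b : Z) : ℝ :=
  ∑ x : Fin (n+1) → Z, if x 0 = a ∧ x (Fin.last n) = b then pathProb M x else 0

lemma pathF_zero (M : Z → Z → ℝ) (a b : Z) : pathF M 0 a b = if a = b then 1 else 0 := by
  rw [pathF, ← (Equiv.funUnique (Fin 1) Z).symm.sum_comp]
  simp only [Equiv.funUnique_symm_apply, pathProb]
  by_cases h : a = b
  · subst h; simp
  · rw [if_neg h]
    apply Finset.sum_eq_zero
    intro x _
    rw [if_neg]
    rintro ⟨h1, h2⟩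
    exact h (h1 ▸ h2 ▸ rfl)

lemma pathF_succ (M : Z → Z → ℝ) (n : ℕ) (a b : Z) :
    pathF M (n+1) a b = ∑ c, M a c * pathF M n c b := by
  have kp : ∀ c (y : Fin (n+1) → Z), pathProb M (Fin.cons c y) = M c (y 0) * pathProb M y := by
    intro c y
    rw [pathProb, Fin.prod_univ_succ, Fin.castSucc_zero, Fin.cons_zero, Fin.cons_succ]
    congr 1
  have klast : ∀ c (y : Fin (n+1) → Z),
      (Fin.cons c y : Fin (n+2) → Z) (Fin.last (n+1)) = y (Fin.last n) := by
    intro c y; rw [← Fin.succ_last, Fin.cons_succ]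
  rw [pathF, ← (Fin.consEquiv (fun _ : Fin (n+2) => Z)).sum_comp, Fintype.sum_prod_type]
  have lhs : ∀ c (y : Fin (n+1) → Z),
      (if (Fin.consEquiv (fun _ : Fin (n+2) => Z)) (c, y) 0 = a ∧
          (Fin.consEquiv (fun _ : Fin (n+2) => Z)) (c, y) (Fin.last (n+1)) = b
        then pathProb M ((Fin.consEquiv (fun _ : Fin (n+2) => Z)) (c, y)) else 0)
      = if c = a ∧ y (Fin.last n) = b then M c (y 0) * pathProb M y else 0 := by
    intro c y
    have : (Fin.consEquiv (fun _ : Fin (n+2) => Z)) (c, y) = Fin.cons c y := rfl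
    rw [this, Fin.cons_zero, klast, kp]
  simp only [lhs]
  trans (∑ y : Fin (n+1) → Z, if y (Fin.last n) = b then M a (y 0) * pathProb M y else 0)
  · rw [Finset.sum_comm]
    apply Finset.sum_congr rfl; intro y _
    simp [ite_and]
  · simp only [pathF, Finset.mul_sum, mul_ite, mul_zero]
    rw [Finset.sum_comm]
    apply Finset.sum_congr rfl; intro y _
    simp [ite_and]

lemma pathF_eq_pow (M : Z → Z → ℝ) (n : ℕ) (a b : Z) :
    pathF M n a b = (Matrix.of M ^ n) a b := by
  induction n generalizing a b with
  | zero => rw [pathF_zero, pow_zero, Matrix.one_apply]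
  | succ n ih =>
    rw [pathF_succ, pow_succ', Matrix.mul_apply]
    exact Finset.sum_congr rfl fun c _ => by rw [ih]; rfl

end aux

section mat
variable {Z : Type*} [Fintype Z] [DecidableEq Z]

lemma matpow_nonneg (M : Matrix Z Z ℝ) (h : ∀ x y, 0 ≤ M x y) (n : ℕ) (x y : Z) :
    0 ≤ (M ^ n) x y := by
  induction n generalizing x y with
  | zero => rw [pow_zero, Matrix.one_apply]; split <;> norm_num
  | succ n ih =>
    rw [pow_succ, Matrix.mul_apply]
    exact Finset.sum_nonneg fun z _ => mul_nonneg (ih x z) (h z y)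

lemma matpow_le (M N : Matrix Z Z ℝ) (hM : ∀ x y, 0 ≤ M x y) (hN : ∀ x y, 0 ≤ N x y)
    (hMN : ∀ x y, M x y ≤ N x y) (n : ℕ) (x y : Z) : (M ^ n) x y ≤ (N ^ n) x y := by
  induction n generalizing x y with
  | zero => simp
  | succ n ih =>
    rw [pow_succ, pow_succ, Matrix.mul_apply, Matrix.mul_apply]
    refine Finset.sum_le_sum fun z _ => mul_le_mul (ih x z) (hMN z y) (hM z y) ?_
    exact matpow_nonneg N hN n x z

lemma matpow_rowsum (M : Matrix Z Z ℝ) (h : ∀ x, ∑ y, M x y = 1) (n : ℕ) (x : Z) :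
    ∑ y, (M ^ n) x y = 1 := by
  induction n generalizing x with
  | zero => simp [Matrix.one_apply]
  | succ n ih =>
    simp only [pow_succ, Matrix.mul_apply]
    rw [Finset.sum_comm]
    have : ∀ z, ∑ y, (M ^ n) x z * M z y = (M ^ n) x z := by
      intro z; rw [← Finset.mul_sum, h z, mul_one]
    simp only [this]
    exact ih x

lemma matpow_rowsum_le (M : Matrix Z Z ℝ) (h0 : ∀ x y, 0 ≤ M x y) (h : ∀ x, ∑ y, M x y ≤ 1)
    (n : ℕ) (x : Z) : ∑ y, (M ^ n) x y ≤ 1 := by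
  induction n generalizing x with
  | zero => simp [Matrix.one_apply]
  | succ n ih =>
    simp only [pow_succ', Matrix.mul_apply]
    rw [Finset.sum_comm]
    calc ∑ z, ∑ y, M x z * (M ^ n) z y = ∑ z, M x z * (∑ y, (M ^ n) z y) := by
          simp [Finset.mul_sum]
      _ ≤ ∑ z, M x z * 1 := Finset.sum_le_sum fun z _ =>
          mul_le_mul_of_nonneg_left (ih z) (h0 x z)
      _ ≤ 1 := by simpa using h x

end mat

section killed
open Finset
variable {Z : Type*} [Fintype Z] [DecidableEq Z]

lemma killedHasSum (P : Z → Z → ℝ) (hP0 : ∀ x y, 0 ≤ P x y) (hP1 : ∀ x, ∑ y, P x y = 1)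
    (hirr : ∀ z b : Z, ∃ m : ℕ, 1 ≤ m ∧ 0 < (Matrix.of P ^ m) z b)
    (B : Finset Z) (b0 : Z) (hb0 : b0 ∈ B) (a : Z) (haB : a ∉ B) :
    HasSum (fun m => ∑ b ∈ B, ((Matrix.of fun x y => if x ∈ B then 0 else P x y) ^ (m+1)) a b)
      1 := by
  set M : Matrix Z Z ℝ := Matrix.of fun x y => if x ∈ B then 0 else P x y with hM
  have hMapp : ∀ x y, M x y = if x ∈ B then 0 else P x y := fun x y => rfl
  have hM0 : ∀ x y, 0 ≤ M x y := by
    intro x y; rw [hMapp]; split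
    · exact le_refl 0
    · exact hP0 x y
  have hMP : ∀ x y, M x y ≤ (Matrix.of P) x y := by
    intro x y; rw [hMapp]; split
    · exact hP0 x y
    · exact le_refl _
  have hMrow_le : ∀ x, ∑ y, M x y ≤ 1 := by
    intro x
    by_cases hx : x ∈ B
    · simp [hMapp, hx]
    · simp only [hMapp, if_neg hx]
      exact le_of_eq (hP1 x)
  have hMrow_eq : ∀ x, x ∉ B → ∑ y, M x y = 1 := by
    intro x hx; simp only [hMapp, if_neg hx]; exact hP1 x
  have hMn0 : ∀ n x y, 0 ≤ (M ^ n) x y := matpow_nonneg M hM0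
  have hkill : ∀ z ∈ B, ∀ k, 1 ≤ k → ∀ y, (M ^ k) z y = 0 := by
    intro z hz k hk y
    obtain ⟨j, rfl⟩ := Nat.exists_eq_add_of_le hk
    rw [add_comm, pow_succ', Matrix.mul_apply]
    apply Finset.sum_eq_zero
    intro w _
    rw [hMapp, if_pos hz, zero_mul]
  set σ : ℕ → Z → ℝ := fun k z => ∑ y ∈ Bᶜ, (M ^ k) z y with hσ
  have hσ_nonneg : ∀ k z, 0 ≤ σ k z := fun k z =>
    Finset.sum_nonneg fun y _ => hMn0 k z y
  have hσ_le_one : ∀ k z, σ k z ≤ 1 := by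
    intro k z
    calc σ k z ≤ ∑ y, (M ^ k) z y :=
          Finset.sum_le_sum_of_subset_of_nonneg (Finset.subset_univ _)
            (fun y _ _ => hMn0 k z y)
      _ ≤ 1 := matpow_rowsum_le M hM0 hMrow_le k z
  have hσ0 : ∀ z, σ 0 z = if z ∈ Bᶜ then 1 else 0 := by
    intro z
    simp [hσ, Matrix.one_apply]
  have dec : ∀ (s : Z) (n k : ℕ), (∑ y ∈ Bᶜ, (M ^ (n + k)) s y) = ∑ z, (M ^ n) s z * σ k z := by
    intro s n k
    simp only [pow_add, Matrix.mul_apply, hσ]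
    rw [Finset.sum_comm]
    exact Finset.sum_congr rfl fun z _ => by rw [Finset.mul_sum]
  have hσ_rec : ∀ k z, σ (k + 1) z = ∑ w, M z w * σ k w := by
    intro k z
    have h := dec z 1 k
    rw [add_comm 1 k] at h
    simpa [pow_one] using h
  have hσ_anti : ∀ k z, σ (k + 1) z ≤ σ k z := by
    intro k
    induction k with
    | zero =>
      intro z
      rw [hσ_rec, hσ0]
      by_cases hz : z ∈ B
      · have h0 : ∀ w, M z w * σ 0 w = 0 := by
          intro w; rw [hMapp, if_pos hz, zero_mul]
        simp only [h0, Finset.sum_const_zero]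
        split <;> norm_num
      · rw [if_pos (Finset.mem_compl.2 hz)]
        calc ∑ w, M z w * σ 0 w ≤ ∑ w, M z w * 1 :=
              Finset.sum_le_sum fun w _ =>
                mul_le_mul_of_nonneg_left (by rw [hσ0]; split <;> norm_num) (hM0 z w)
          _ = 1 := by simp only [mul_one]; exact hMrow_eq z hz
    | succ k ih =>
      intro z
      rw [hσ_rec, hσ_rec]
      exact Finset.sum_le_sum fun w _ => mul_le_mul_of_nonneg_left (ih w) (hM0 z w)
  have hσ_mono : ∀ z, Antitone (fun k => σ k z) :=
    fun z => antitone_nat_of_succ_le (fun k => hσ_anti k z)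
  choose mz hmz1 hmz2 using fun z => hirr z b0
  have hσ_lt : ∀ z, σ (mz z) z < 1 := by
    intro z
    have h1 : σ (mz z) z ≤ ∑ y ∈ Bᶜ, (Matrix.of P ^ (mz z)) z y :=
      Finset.sum_le_sum fun y _ => matpow_le M (Matrix.of P) hM0 hP0 hMP (mz z) z y
    have h2 : ∑ y ∈ B, (Matrix.of P ^ (mz z)) z y + ∑ y ∈ Bᶜ, (Matrix.of P ^ (mz z)) z y = 1 := by
      rw [Finset.sum_add_sum_compl]
      exact matpow_rowsum (Matrix.of P) hP1 (mz z) z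
    have h3 : (Matrix.of P ^ (mz z)) z b0 ≤ ∑ y ∈ B, (Matrix.of P ^ (mz z)) z y :=
      Finset.single_le_sum (fun y _ => matpow_nonneg (Matrix.of P) hP0 (mz z) z y) hb0
    have h4 := hmz2 z
    linarith
  set K : ℕ := Finset.univ.sup mz with hK
  have hK1 : 1 ≤ K := le_trans (hmz1 a) (Finset.le_sup (Finset.mem_univ a))
  have hσK_lt : ∀ z, σ K z < 1 := fun z =>
    lt_of_le_of_lt (hσ_mono z (Finset.le_sup (Finset.mem_univ z))) (hσ_lt z)
  set c : ℝ := Finset.univ.sup' ⟨a, Finset.mem_univ a⟩ (σ K) with hc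
  have hc1 : c < 1 := (Finset.sup'_lt_iff _).2 fun z _ => hσK_lt z
  have hc0 : 0 ≤ c := le_trans (hσ_nonneg K a) (Finset.le_sup' _ (Finset.mem_univ a))
  have hcz : ∀ z, σ K z ≤ c := fun z => Finset.le_sup' _ (Finset.mem_univ z)
  set t : ℕ → ℝ := fun n => ∑ y ∈ Bᶜ, (M ^ n) a y with ht
  have ht_nonneg : ∀ n, 0 ≤ t n := fun n => Finset.sum_nonneg fun y _ => hMn0 n a y
  have ht0 : t 0 = 1 := by
    simp [ht, Matrix.one_apply, Finset.mem_compl.2 haB]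
  have ht_dec : ∀ n k, t (n + k) = ∑ z, (M ^ n) a z * σ k z := fun n k => dec a n k
  have ht_anti : ∀ n k, t (n + k) ≤ t n := by
    intro n k
    rcases Nat.eq_zero_or_pos k with hk | hk
    · subst hk; exact le_of_eq (by rw [add_zero])
    · rw [ht_dec]
      have hz0 : ∀ z ∈ B, (M ^ n) a z * σ k z = 0 := by
        intro z hz
        have h0 : σ k z = 0 := Finset.sum_eq_zero fun y _ => hkill z hz k hk y
        rw [h0, mul_zero]
      rw [← Finset.sum_add_sum_compl B (fun z => (M ^ n) a z * σ k z),
        Finset.sum_eq_zero hz0, zero_add]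
      exact Finset.sum_le_sum fun z _ => by
        calc (M ^ n) a z * σ k z ≤ (M ^ n) a z * 1 :=
              mul_le_mul_of_nonneg_left (hσ_le_one k z) (hMn0 n a z)
          _ = (M ^ n) a z := mul_one _
  have ht_contract : ∀ n, t (n + K) ≤ c * t n := by
    intro n
    rw [ht_dec]
    have hz0 : ∀ z ∈ B, (M ^ n) a z * σ K z = 0 := by
      intro z hz
      have h0 : σ K z = 0 := Finset.sum_eq_zero fun y _ => hkill z hz K hK1 y
      rw [h0, mul_zero]
    rw [← Finset.sum_add_sum_compl B (fun z => (M ^ n) a z * σ K z),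
      Finset.sum_eq_zero hz0, zero_add, ht, Finset.mul_sum]
    exact Finset.sum_le_sum fun z _ => by
      rw [mul_comm c]
      exact mul_le_mul_of_nonneg_left (hcz z) (hMn0 n a z)
  have ht_pow : ∀ i, t (i * K) ≤ c ^ i := by
    intro i
    induction i with
    | zero => simp [ht0]
    | succ i ih =>
      have h1 : (i + 1) * K = i * K + K := by ring
      rw [h1, pow_succ]
      calc t (i * K + K) ≤ c * t (i * K) := ht_contract (i * K)
        _ ≤ c * c ^ i := mul_le_mul_of_nonneg_left ih hc0
        _ = c ^ i * c := mul_comm _ _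
  have ht_le : ∀ n, t n ≤ c ^ (n / K) := by
    intro n
    have h1 : n / K * K + (n - n / K * K) = n := by
      have := Nat.div_mul_le_self n K
      omega
    calc t n = t (n / K * K + (n - n / K * K)) := by rw [h1]
      _ ≤ t (n / K * K) := ht_anti _ _
      _ ≤ c ^ (n / K) := ht_pow _
  have hdiv : Filter.Tendsto (fun n : ℕ => n / K) Filter.atTop Filter.atTop := by
    apply Filter.tendsto_atTop_atTop.2
    intro b
    exact ⟨b * K, fun n hn => (Nat.le_div_iff_mul_le hK1).2 hn⟩
  have ht_tendsto : Filter.Tendsto t Filter.atTop (nhds 0) := by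
    apply squeeze_zero ht_nonneg ht_le
    exact (tendsto_pow_atTop_nhds_zero_of_lt_one hc0 hc1).comp hdiv
  have htel : ∀ n, ∑ b ∈ B, (M ^ (n + 1)) a b = t n - t (n + 1) := by
    intro n
    have h1 : ∑ b ∈ B, (M ^ (n + 1)) a b + t (n + 1) = ∑ y, (M ^ (n + 1)) a y :=
      Finset.sum_add_sum_compl B _
    have h2 : ∑ y, (M ^ (n + 1)) a y = t n := by
      rw [pow_succ]
      simp only [Matrix.mul_apply]
      rw [Finset.sum_comm]
      have h3 : ∀ z, ∑ y, (M ^ n) a z * M z y = (M ^ n) a z * ∑ y, M z y := by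
        intro z; rw [Finset.mul_sum]
      simp only [h3]
      rw [ht, ← Finset.sum_add_sum_compl B (fun z => (M ^ n) a z * ∑ y, M z y)]
      rw [Finset.sum_eq_zero (fun z hz => by
        rw [(Finset.sum_eq_zero fun y _ => by rw [hMapp, if_pos hz] : ∑ y, M z y = 0), mul_zero]),
        zero_add]
      exact Finset.sum_congr rfl fun z hz => by
        rw [hMrow_eq z (Finset.mem_compl.1 hz), mul_one]
    linarith
  have hnn : ∀ m : ℕ, 0 ≤ ∑ b ∈ B, (M ^ (m + 1)) a b :=
    fun m => Finset.sum_nonneg fun b _ => hMn0 (m + 1) a b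
  rw [hasSum_iff_tendsto_nat_of_nonneg hnn]
  have hps : ∀ n : ℕ, ∑ m ∈ Finset.range n, ∑ b ∈ B, (M ^ (m + 1)) a b = 1 - t n := by
    intro n
    have h1 : ∀ m ∈ Finset.range n, ∑ b ∈ B, (M ^ (m + 1)) a b = t m - t (m + 1) :=
      fun m _ => htel m
    rw [Finset.sum_congr rfl h1, Finset.sum_range_sub' t n, ht0]
  simp only [hps]
  have : Filter.Tendsto (fun n => 1 - t n) Filter.atTop (nhds (1 - 0)) :=
    Filter.Tendsto.sub tendsto_const_nhds ht_tendsto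
  simpa using this

end killed

theorem stmt_7 {Z : Type*} [Fintype Z] [Nonempty Z] [DecidableEq Z] (P : Z → Z → ℝ)
    (hP : RowStochastic P) (hirr : IsIrreducibleChain P)
    (W : Finset Z) (hW : 2 ≤ W.card) (a : Z) (ha : a ∈ W) :
    ∑ b ∈ W.erase a, arrowProb P W a b = 1 := by
  obtain ⟨hP0, hP1⟩ := hP
  set B : Finset Z := W.erase a with hBdef
  have haB : a ∉ B := Finset.notMem_erase a W
  have hBne : B.Nonempty := by
    rw [← Finset.card_pos, Finset.card_erase_of_mem ha]; omega
  obtain ⟨b0, hb0⟩ := hBne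
  set Mf : Z → Z → ℝ := fun x y => if x ∈ B then 0 else P x y with hMf
  have harrow : ∀ b, arrowProb P W a b = ∑' m, (Matrix.of Mf ^ (m + 1)) a b := by
    intro b
    rw [arrowProb]
    congr 1
    funext m
    rw [← pathF_eq_pow, pathF, Finset.sum_filter]
    apply Finset.sum_congr rfl
    intro x _
    by_cases h1 : x 0 = a ∧ x (Fin.last (m + 1)) = b
    · by_cases h2 : ∀ i : Fin (m + 1 + 1), i < Fin.last (m + 1) → x i ∈ W → x i = a
      · rw [if_pos ⟨h1.1, h1.2, h2⟩, if_pos h1]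
        rw [pathProb, pathProb]
        apply Finset.prod_congr rfl
        intro i _
        have hi := h2 i.castSucc (Fin.castSucc_lt_last i)
        have hnB : x i.castSucc ∉ B := by
          rw [hBdef, Finset.mem_erase]
          rintro ⟨hne, hmem⟩
          exact hne (hi hmem)
        simp only [hMf, if_neg hnB]
      · rw [if_neg (by rintro ⟨_, _, h⟩; exact h2 h), if_pos h1]
        push_neg at h2
        obtain ⟨i, hilt, hiW, hia⟩ := h2
        obtain ⟨j, rfl⟩ := Fin.exists_castSucc_eq.2 (ne_of_lt hilt)
        symm
        apply Finset.prod_eq_zero (Finset.mem_univ j)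
        have hB : x j.castSucc ∈ B := Finset.mem_erase.2 ⟨hia, hiW⟩
        simp only [hMf, if_pos hB]
    · rw [if_neg (by rintro ⟨u, v, _⟩; exact h1 ⟨u, v⟩), if_neg h1]
  have main : HasSum (fun m => ∑ b ∈ B, (Matrix.of Mf ^ (m + 1)) a b) 1 :=
    killedHasSum P hP0 hP1 hirr B b0 hb0 a haB
  have hnn : ∀ x y, 0 ≤ (Matrix.of Mf) x y := by
    intro x y
    show 0 ≤ if x ∈ B then 0 else P x y
    split
    · exact le_refl 0
    · exact hP0 x y
  have hsummable : ∀ b ∈ B, Summable (fun m => (Matrix.of Mf ^ (m + 1)) a b) := by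
    intro b hb
    apply Summable.of_nonneg_of_le (fun m => matpow_nonneg _ hnn (m + 1) a b)
      (fun m => Finset.single_le_sum (fun y _ => matpow_nonneg _ hnn (m + 1) a y) hb)
      main.summable
  calc ∑ b ∈ B, arrowProb P W a b
      = ∑ b ∈ B, ∑' m, (Matrix.of Mf ^ (m + 1)) a b :=
        Finset.sum_congr rfl fun b _ => harrow b
    _ = ∑' m, ∑ b ∈ B, (Matrix.of Mf ^ (m + 1)) a b := (Summable.tsum_finsetSum hsummable).symm
    _ = 1 := main.tsum_eq
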